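/- In a serial-dictatorship run with strict complete preferences and worst-roommate comparison, the first dictator receives, in the output assignment, the best possible worst-roommate rank she can receive in any feasible assignment using a room of the smallest capacity; hence any Pareto improvement must change a strictly earlier dictator's room, yielding by induction that the output is Pareto optimal. -/

import Mathlib

open Finset

/-- `A` is a feasible assignment for room capacities `r`: room `j` has exactly `r j` players. -/
def Feasible {P : Type*} [Fintype P] [DecidableEq P] {k : ℕ} (r : Fin k → ℕ)
    (A : P → Fin k) : Prop :=
  ∀ j : Fin k, (univ.filter fun p => A p = j).card = r j

/-- The rank (smaller = more preferred) of player `i`'s best roommate under assignment `A`. -/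
def bestRank {P ι : Type*} [Fintype P] [DecidableEq P] [DecidableEq ι]
    (rk : P → P → ℕ) (A : P → ι) (i : P) : WithTop ℕ :=
  ((univ.filter fun p => p ≠ i ∧ A p = A i).image (rk i)).min

/-- The rank (smaller = more preferred) of player `i`'s worst roommate under assignment `A`. -/
def worstRank {P ι : Type*} [Fintype P] [DecidableEq P] [DecidableEq ι]
    (rk : P → P → ℕ) (A : P → ι) (i : P) : WithBot ℕ :=
  ((univ.filter fun p => p ≠ i ∧ A p = A i).image (rk i)).max

/-- Pareto domination under best-roommate comparison: `A'` dominates `A`. -/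
def DominatesB {P ι : Type*} [Fintype P] [DecidableEq P] [DecidableEq ι]
    (rk : P → P → ℕ) (A' A : P → ι) : Prop :=
  (∀ i, bestRank rk A' i ≤ bestRank rk A i) ∧ ∃ i, bestRank rk A' i < bestRank rk A i

/-- Pareto domination under worst-roommate comparison: `A'` dominates `A`. -/
def DominatesW {P ι : Type*} [Fintype P] [DecidableEq P] [DecidableEq ι]
    (rk : P → P → ℕ) (A' A : P → ι) : Prop :=
  (∀ i, worstRank rk A' i ≤ worstRank rk A i) ∧ ∃ i, worstRank rk A' i < worstRank rk A i

/-- Strict preferences: each player `i` ranks distinct other players differently. -/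
def StrictPrefs {P : Type*} (rk : P → P → ℕ) : Prop :=
  ∀ i j j' : P, j ≠ i → j' ≠ i → rk i j = rk i j' → j = j'

lemma sd_worst_lt {P ι ι' : Type*} [Fintype P] [DecidableEq P] [DecidableEq ι] [DecidableEq ι']
    (rk : P → P → ℕ) (A : P → ι) (A' : P → ι') (i q : P) (hq : q ≠ i) (hq' : A' q = A' i)
    (h : ∀ p, p ≠ i → A p = A i → rk i p < rk i q) :
    worstRank rk A i < worstRank rk A' i := by
  have h1 : (rk i q : WithBot ℕ) ≤ worstRank rk A' i := by
    apply Finset.le_max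
    exact mem_image_of_mem _ (by simp [hq, hq'])
  refine lt_of_lt_of_le ?_ h1
  rcases hs : ((univ.filter fun p => p ≠ i ∧ A p = A i).image (rk i)).max with _ | b
  · unfold worstRank; rw [hs]; exact WithBot.bot_lt_coe _
  · have hb := Finset.mem_of_max hs
    rcases mem_image.mp hb with ⟨p, hp, rfl⟩
    rcases mem_filter.mp hp with ⟨-, hp1, hp2⟩
    unfold worstRank
    rw [hs]
    exact WithBot.coe_lt_coe.mpr (h p hp1 hp2)

lemma sd_fibers_eq {P : Type*} [Fintype P] [DecidableEq P]
    {k : ℕ} {r : Fin k → ℕ} (hmono : Monotone r) {rk : P → P → ℕ}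
    (hk : 0 < k) {A : P → Fin k} (hF : Feasible r A)
    {d : Fin k → P} (hd : ∀ j : Fin k, A (d j) = j)
    (hSD : ∀ j : Fin k, ∀ p q : P, A p = j → p ≠ d j → j < A q →
        rk (d j) p < rk (d j) q)
    {A' : P → Fin k} (hF' : Feasible r A')
    (hdom : ∀ i, worstRank rk A' i ≤ worstRank rk A i) :
    ∀ j : Fin k, (univ.filter fun p => A' p = A' (d j)) = (univ.filter fun p => A p = j) := by
  suffices h : ∀ n : ℕ, ∀ hn : n < k,
      (univ.filter fun p => A' p = A' (d ⟨n, hn⟩)) = (univ.filter fun p => A p = ⟨n, hn⟩) by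
    intro j; exact h j.1 j.2
  intro n
  induction n using Nat.strong_induction_on with
  | _ n IH =>
  intro hn
  set j : Fin k := ⟨n, hn⟩ with hj
  -- Step A: the A'-room of d j is contained in the A-room of d j
  have hTS : (univ.filter fun p => A' p = A' (d j)) ⊆ (univ.filter fun p => A p = j) := by
    intro q hqT
    simp only [mem_filter, mem_univ, true_and] at hqT ⊢
    by_contra hqS
    have hqd : q ≠ d j := by rintro rfl; exact hqS (hd j)
    have hgt : j < A q := by
      rcases lt_trichotomy (A q) j with hlt | heq | hgt
      · exfalso
        have hlt' : (A q).1 < n := hlt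
        have hfib := IH (A q).1 hlt' (A q).2
        have hq1 : A' q = A' (d ⟨(A q).1, (A q).2⟩) := by
          have hmem : q ∈ univ.filter fun p => A p = (⟨(A q).1, (A q).2⟩ : Fin k) := by
            simp
          rw [← hfib] at hmem
          simpa using hmem
        have hd1 : d j ∈ univ.filter fun p => A p = (⟨(A q).1, (A q).2⟩ : Fin k) := by
          rw [← hfib]
          simp only [mem_filter, mem_univ, true_and]
          rw [← hq1, hqT]
        have hAdj : A (d j) = (⟨(A q).1, (A q).2⟩ : Fin k) := by simpa using hd1
        rw [hd j] at hAdj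
        exact absurd hAdj.symm (ne_of_lt hlt)
      · exact absurd heq hqS
      · exact hgt
    have hwlt := sd_worst_lt rk A A' (d j) q hqd hqT
      (fun p hp hAp => hSD j p q (by rw [← hd j]; exact hAp) hp hgt)
    exact absurd (hdom (d j)) (not_le.mpr hwlt)
  -- capacities of earlier A'-rooms of dictators
  have hcap : ∀ i : Fin k, i.1 < n → r (A' (d i)) = r i := by
    intro i hi
    have hfib := IH i.1 hi i.2
    rw [← hF' (A' (d i)), ← hF i]
    exact congrArg Finset.card hfib
  -- injectivity of A' ∘ d on indices ≤ n
  have hinj : ∀ i i' : Fin k, i.1 ≤ n → i'.1 ≤ n → A' (d i) = A' (d i') → i = i' := by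
    suffices hs : ∀ i i' : Fin k, i.1 < i'.1 → i'.1 ≤ n → A' (d i) ≠ A' (d i') by
      intro i i' hi hi' heq
      rcases lt_trichotomy i.1 i'.1 with h | h | h
      · exact absurd heq (hs i i' h hi')
      · exact Fin.ext h
      · exact absurd heq.symm (hs i' i h hi)
    intro i i' hii hi' heq
    have hi : i.1 < n := lt_of_lt_of_le hii hi'
    have hfib := IH i.1 hi i.2
    have hd1 : d i' ∈ univ.filter fun p => A p = (⟨i.1, i.2⟩ : Fin k) := by
      rw [← hfib]
      simp only [mem_filter, mem_univ, true_and]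
      exact heq.symm
    have : A (d i') = (⟨i.1, i.2⟩ : Fin k) := by simpa using hd1
    rw [hd i'] at this
    have : i'.1 = i.1 := congrArg Fin.val this
    omega
  -- Step B: cardinality via pigeonhole
  have hcard : r j ≤ (univ.filter fun p => A' p = A' (d j)).card := by
    rw [hF' (A' (d j))]
    by_contra hlt
    push_neg at hlt
    set c := r j with hc
    set M : Finset (Fin k) := univ.filter fun i => i.1 ≤ n ∧ r (A' (d i)) < c with hM
    set L : Finset (Fin k) := univ.filter fun i => r i < c with hL
    have h1 : M.card ≤ L.card := by
      apply Finset.card_le_card_of_injOn (fun i => A' (d i))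
      · intro i hi
        simp only [hM, Finset.coe_filter, Set.mem_setOf_eq, Finset.mem_coe, mem_filter, mem_univ, true_and] at hi
        simp only [hL, Finset.coe_filter, Set.mem_setOf_eq, Finset.mem_coe, mem_filter, mem_univ, true_and]
        exact hi.2
      · intro i hi i' hi' heq
        simp only [hM, Finset.coe_filter, Set.mem_setOf_eq, mem_univ, true_and] at hi hi'
        exact hinj i i' hi.1 hi'.1 heq
    have hLM : L ⊆ M := by
      intro i hi
      simp only [hL, mem_filter, mem_univ, true_and] at hi
      have hiv : i.1 < n := by
        by_contra hge
        push_neg at hge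
        have : j ≤ i := hge
        exact absurd (hmono this) (not_le.mpr hi)
      simp only [hM, mem_filter, mem_univ, true_and]
      exact ⟨le_of_lt hiv, by rw [hcap i hiv]; exact hi⟩
    have hjM : j ∈ M := by
      simp only [hM, mem_filter, mem_univ, true_and]
      exact ⟨le_refl n, hlt⟩
    have hjL : j ∉ L := by
      simp only [hL, mem_filter, mem_univ, true_and]
      exact lt_irrefl c
    have h2 : L.card < M.card := Finset.card_lt_card ⟨hLM, fun hsub => hjL (hsub hjM)⟩
    omega
  have := Finset.eq_of_subset_of_card_le hTS (by rw [hF j]; exact hcard)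
  exact this

theorem serial_dictatorship_first_dictator_optimal {P : Type*} [Fintype P] [DecidableEq P]
    (k : ℕ) (r : Fin k → ℕ) (hmono : Monotone r)
    (rk : P → P → ℕ) (hstrict : StrictPrefs rk)
    (hsum : ∑ j, r j = Fintype.card P) (hk : 0 < k)
    (A : P → Fin k) (hF : Feasible r A)
    (d : Fin k → P) (hd : ∀ j : Fin k, A (d j) = j)
    (hSD : ∀ j : Fin k, ∀ p q : P, A p = j → p ≠ d j → j < A q →
        rk (d j) p < rk (d j) q) :
    (∀ A' : P → Fin k, Feasible r A' →
        r (A' (d ⟨0, hk⟩)) = r ⟨0, hk⟩ →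
        worstRank rk A (d ⟨0, hk⟩) ≤ worstRank rk A' (d ⟨0, hk⟩)) ∧
    (∀ A' : P → Fin k, Feasible r A' → ¬ DominatesW rk A' A) := by
  constructor
  · -- Part 1: first dictator optimality
    intro A' hF' hr0
    set j0 : Fin k := ⟨0, hk⟩ with hj0
    by_cases hsub : (univ.filter fun p => A' p = A' (d j0)) ⊆ (univ.filter fun p => A p = j0)
    · -- same room, so equal worst ranks
      have heq := Finset.eq_of_subset_of_card_le hsub
        (by rw [hF j0, hF' (A' (d j0)), hr0])
      have hmem : ∀ p, A' p = A' (d j0) ↔ A p = j0 := by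
        intro p
        have := Finset.ext_iff.mp heq p
        simpa using this
      have : worstRank rk A (d j0) = worstRank rk A' (d j0) := by
        unfold worstRank
        apply congrArg
        apply congrArg
        ext p
        simp only [mem_filter, mem_univ, true_and, hd j0, hmem p]
      exact le_of_eq this
    · -- some roommate from a strictly later room
      rw [Finset.not_subset] at hsub
      obtain ⟨q, hqT, hqS⟩ := hsub
      simp only [mem_filter, mem_univ, true_and] at hqT hqS
      have hqd : q ≠ d j0 := by rintro rfl; exact hqS (hd j0)
      have hgt : j0 < A q := by
        refine lt_of_le_of_ne ?_ (Ne.symm hqS)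
        rw [Fin.le_def]; exact Nat.zero_le _
      exact le_of_lt (sd_worst_lt rk A A' (d j0) q hqd hqT
        (fun p hp hAp => hSD j0 p q (by rw [← hd j0]; exact hAp) hp hgt))
  · -- Part 2: Pareto optimality
    intro A' hF' hdom
    obtain ⟨hle, i, hlt⟩ := hdom
    have hfib := sd_fibers_eq hmono hk hF hd hSD hF' hle
    have h1 := hfib (A i)
    have hi : A' i = A' (d (A i)) := by
      have hmem : i ∈ univ.filter fun p => A p = A i := by simp
      rw [← h1] at hmem
      simpa using hmem
    have hmem : ∀ p, A' p = A' i ↔ A p = A i := by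
      intro p
      rw [hi]
      have := Finset.ext_iff.mp h1 p
      simpa using this
    have : worstRank rk A' i = worstRank rk A i := by
      unfold worstRank
      apply congrArg
      apply congrArg
      ext p
      simp only [mem_filter, mem_univ, true_and, hmem p]
    exact lt_irrefl _ (this ▸ hlt)
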